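/- arXiv:2310.06809 — 2 statements merged into one kernel-verified Lean document; each statement's English description precedes it below -/
import Mathlib

section
/- Let k₁, k₂ be positive integers with k = k₁ + k₂, and let p be a prime with p > k + 2. Then in ZMod p one has Σ_{0 < m₁ < m₂ < p} 1/(m₁^{k₁} m₂^{k₂}) = (−1)^{k₂} · binomial(k₁+k₂, k₁) · B_{p−k}/k, where B_{p−k} is the (p−k)-th Bernoulli number, whose denominator is coprime to p (since p−1 ∤ p−k), so both sides are well-defined images of rational numbers in ZMod p. (When p−k is odd and greater than 1, B_{p−k} = 0 in either sign convention, so the convention is immaterial.) -/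
open Finset

noncomputable def ratImage (n : ℕ) (q : ℚ) : ZMod n :=
  (q.num : ZMod n) * ((q.den : ZMod n))⁻¹

section Aux

variable {p : ℕ} [hp : Fact p.Prime]

lemma ratImage_eq_cast (q : ℚ) : ratImage p q = (q : ZMod p) := by
  rw [ratImage, Rat.cast_def, div_eq_mul_inv]

lemma nice_iff (q : ℚ) : ((q.den : ZMod p) ≠ 0) ↔ ¬ p ∣ q.den := by
  rw [Ne, ZMod.natCast_eq_zero_iff]

lemma nice_mul {q r : ℚ} (hq : ¬ p ∣ q.den) (hr : ¬ p ∣ r.den) : ¬ p ∣ (q * r).den := by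
  intro h
  rcases (Nat.Prime.dvd_mul hp.out).mp (h.trans (Rat.mul_den_dvd q r)) with h' | h'
  exacts [hq h', hr h']

lemma nice_add {q r : ℚ} (hq : ¬ p ∣ q.den) (hr : ¬ p ∣ r.den) : ¬ p ∣ (q + r).den := by
  intro h
  rcases (Nat.Prime.dvd_mul hp.out).mp (h.trans (Rat.add_den_dvd q r)) with h' | h'
  exacts [hq h', hr h']

lemma nice_sum {ι : Type*} {s : Finset ι} {f : ι → ℚ} (h : ∀ i ∈ s, ¬ p ∣ (f i).den) :
    ¬ p ∣ (∑ i ∈ s, f i).den := by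
  classical
  induction s using Finset.cons_induction with
  | empty => simpa using hp.out.one_lt.ne'
  | cons a s ha ih =>
    rw [Finset.sum_cons]
    exact nice_add (h a (Finset.mem_cons_self a s))
      (ih fun i hi => h i (Finset.mem_cons.mpr (Or.inr hi)))

lemma cast_sum_zmod {ι : Type*} {s : Finset ι} {f : ι → ℚ} (h : ∀ i ∈ s, ¬ p ∣ (f i).den) :
    ((∑ i ∈ s, f i : ℚ) : ZMod p) = ∑ i ∈ s, ((f i : ℚ) : ZMod p) := by
  classical
  induction s using Finset.cons_induction with
  | empty => simp
  | cons a s ha ih =>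
    rw [Finset.sum_cons, Finset.sum_cons,
      Rat.cast_add_of_ne_zero ((nice_iff _).mpr (h a (Finset.mem_cons_self a s)))
        ((nice_iff _).mpr (nice_sum fun i hi => h i (Finset.mem_cons.mpr (Or.inr hi)))),
      ih fun i hi => h i (Finset.mem_cons.mpr (Or.inr hi))]

lemma bernoulli_den_nice : ∀ m : ℕ, m ≤ p - 2 → ¬ p ∣ (bernoulli m).den := by
  intro m
  induction m using Nat.strong_induction_on with
  | _ m ih =>
    intro hm
    match m with
    | 0 => simpa using hp.out.one_lt.ne'
    | Nat.succ m' =>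
      set m := m' + 1
      have hsum := sum_bernoulli (m + 1)
      rw [if_neg (by omega)] at hsum
      rw [Finset.sum_range_succ, Nat.choose_succ_self_right] at hsum
      have hq : (bernoulli m) = (-(∑ k ∈ Finset.range m, ((m + 1).choose k : ℚ) * bernoulli k))
          * ((m + 1 : ℕ) : ℚ)⁻¹ := by
        have h1 : ((m + 1 : ℕ) : ℚ) ≠ 0 := by positivity
        field_simp
        push_cast at hsum ⊢
        linarith [hsum]
      rw [hq]
      have hnum : ¬ p ∣ (-(∑ k ∈ Finset.range m, ((m + 1).choose k : ℚ) * bernoulli k)).den := by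
        rw [Rat.den_neg_eq_den]
        apply nice_sum
        intro i hi
        have hi' : i < m := Finset.mem_range.mp hi
        have : ¬ p ∣ ((((m + 1).choose i : ℕ) : ℚ)).den := by simpa using hp.out.one_lt.ne'
        exact nice_mul this (ih i hi' (by omega))
      have hden : ¬ p ∣ (((m + 1 : ℕ) : ℚ)⁻¹).den := by
        rw [Rat.inv_natCast_den_of_pos (by omega)]
        exact fun hd => absurd (Nat.le_of_dvd (by omega) hd) (by omega)
      intro h
      rcases (Nat.Prime.dvd_mul hp.out).mp (h.trans (Rat.mul_den_dvd _ _)) with h' | h'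
      exacts [hnum h', hden h']

lemma zmod_sum_range_pow (j : ℕ) (hj : 0 < j) :
    (∑ m ∈ Finset.range p, (m : ZMod p) ^ j) = if (p - 1) ∣ j then -1 else 0 := by
  classical
  have h1 : (∑ m ∈ Finset.range p, (m : ZMod p) ^ j) = ∑ x : ZMod p, x ^ j := by
    refine Finset.sum_nbij' (fun m => (m : ZMod p)) (fun x => x.val) ?_ ?_ ?_ ?_ ?_
    · intro a _; exact Finset.mem_univ _
    · intro a _; exact Finset.mem_range.mpr (ZMod.val_lt a)
    · intro a ha; exact ZMod.val_cast_of_lt (Finset.mem_range.mp ha)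
    · intro a _; exact ZMod.natCast_zmod_val a
    · intro a _; rfl
  rw [h1]
  have h2 : (∑ x : ZMod p, x ^ j) = ∑ x : (ZMod p)ˣ, ((x : ZMod p)) ^ j := by
    let φ : (ZMod p)ˣ ↪ ZMod p := ⟨fun x => x, fun _ _ h => Units.ext h⟩
    have huniv : Finset.univ.map φ = Finset.univ \ {0} := by
      ext x
      simp only [Finset.mem_map, Finset.mem_univ, Function.Embedding.coeFn_mk, true_and,
        Finset.mem_sdiff, Finset.mem_singleton, φ]
      exact isUnit_iff_ne_zero
    calc ∑ x : ZMod p, x ^ j = ∑ x ∈ Finset.univ \ {(0 : ZMod p)}, x ^ j := by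
          rw [← Finset.sum_sdiff (Finset.subset_univ ({0} : Finset (ZMod p))),
            Finset.sum_singleton, zero_pow hj.ne', add_zero]
      _ = ∑ x : (ZMod p)ˣ, ((x : ZMod p)) ^ j := by
          rw [← huniv, Finset.sum_map]; rfl
  rw [h2]
  have := FiniteField.sum_pow_units (ZMod p) j
  rwa [ZMod.card p] at this

lemma choose_cast_eq {k₁ k₂ : ℕ} (h1 : 0 < k₁) (hkp : k₁ + k₂ + 2 < p) :
    (((p - k₁).choose k₂ : ℕ) : ZMod p) = (-1) ^ k₂ * ((k₁ + k₂ - 1).choose k₂ : ℕ) := by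
  have hfac : ((k₂.factorial : ℕ) : ZMod p) ≠ 0 := by
    rw [Ne, ZMod.natCast_eq_zero_iff]
    intro h
    exact absurd ((Nat.Prime.dvd_factorial hp.out).mp h) (by omega)
  apply mul_left_cancel₀ hfac
  have e1 : k₂.factorial * (p - k₁).choose k₂ = (p - k₁).descFactorial k₂ :=
    (Nat.descFactorial_eq_factorial_mul_choose _ _).symm
  have e2 : k₂.factorial * (k₁ + k₂ - 1).choose k₂ = (k₁ + k₂ - 1).descFactorial k₂ :=
    (Nat.descFactorial_eq_factorial_mul_choose _ _).symm
  rw [← Nat.cast_mul, e1, Nat.descFactorial_eq_prod_range]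
  have e3 : ((∏ i ∈ Finset.range k₂, (p - k₁ - i) : ℕ) : ZMod p)
      = ∏ i ∈ Finset.range k₂, ((p - k₁ - i : ℕ) : ZMod p) := by push_cast; ring
  rw [e3]
  have e4 : ∀ i ∈ Finset.range k₂, ((p - k₁ - i : ℕ) : ZMod p) = -(((k₁ + i : ℕ)) : ZMod p) := by
    intro i hi
    have hi' : i < k₂ := Finset.mem_range.mp hi
    have : p - k₁ - i = p - (k₁ + i) := by omega
    rw [this, Nat.cast_sub (by omega), ZMod.natCast_self, zero_sub]
  rw [Finset.prod_congr rfl e4]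
  have e45 : (∏ i ∈ Finset.range k₂, -(((k₁ + i : ℕ)) : ZMod p))
      = (-1) ^ k₂ * ∏ i ∈ Finset.range k₂, (((k₁ + i : ℕ)) : ZMod p) := by
    calc (∏ i ∈ Finset.range k₂, -(((k₁ + i : ℕ)) : ZMod p))
        = ∏ i ∈ Finset.range k₂, ((-1) * (((k₁ + i : ℕ)) : ZMod p)) := by
          refine Finset.prod_congr rfl fun i _ => ?_; rw [neg_one_mul]
      _ = (∏ _i ∈ Finset.range k₂, (-1 : ZMod p)) *
            ∏ i ∈ Finset.range k₂, (((k₁ + i : ℕ)) : ZMod p) := Finset.prod_mul_distrib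
      _ = (-1) ^ k₂ * ∏ i ∈ Finset.range k₂, (((k₁ + i : ℕ)) : ZMod p) := by
          rw [Finset.prod_const, Finset.card_range]
  rw [e45]
  have nat_eq : (∏ i ∈ Finset.range k₂, (k₁ + i)) = (k₁ + k₂ - 1).descFactorial k₂ := by
    rw [Nat.descFactorial_eq_prod_range, ← Finset.prod_range_reflect]
    refine Finset.prod_congr rfl fun j hj => ?_
    have := Finset.mem_range.mp hj
    omega
  have e5 : (∏ i ∈ Finset.range k₂, (((k₁ + i : ℕ)) : ZMod p))
      = ((∏ i ∈ Finset.range k₂, (k₁ + i) : ℕ) : ZMod p) := by push_cast; ring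
  rw [e5, nat_eq, ← e2]
  push_cast
  ring

end Aux

lemma faul (a : ℕ) (n : ℕ) :
    ((a + 1 : ℕ) : ℚ) * ∑ m ∈ Finset.range n, (m : ℚ) ^ a
      = ∑ i ∈ Finset.range (a + 1), bernoulli i * ((a + 1).choose i : ℚ) * (n : ℚ) ^ (a + 1 - i) := by
  rw [sum_range_pow n a, Finset.mul_sum]
  refine Finset.sum_congr rfl fun i _ => ?_
  have h : ((a + 1 : ℕ) : ℚ) ≠ 0 := by positivity
  push_cast
  field_simp

lemma key_q (p a b : ℕ) :
    ((a + 1 : ℕ) : ℚ) * ∑ m₂ ∈ Finset.range p, ∑ m₁ ∈ Finset.range m₂, (m₁ : ℚ) ^ a * (m₂ : ℚ) ^ b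
      = ∑ i ∈ Finset.range (a + 1), bernoulli i * ((a + 1).choose i : ℚ) *
          ∑ m ∈ Finset.range p, (m : ℚ) ^ (b + (a + 1 - i)) := by
  rw [Finset.mul_sum]
  have step : ∀ m₂ : ℕ, ((a + 1 : ℕ) : ℚ) * ∑ m₁ ∈ Finset.range m₂, (m₁ : ℚ) ^ a * (m₂ : ℚ) ^ b
      = ∑ i ∈ Finset.range (a + 1),
          bernoulli i * ((a + 1).choose i : ℚ) * (m₂ : ℚ) ^ (b + (a + 1 - i)) := by
    intro m₂
    rw [← Finset.sum_mul, ← mul_assoc, faul a m₂, Finset.sum_mul]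
    refine Finset.sum_congr rfl fun i _ => ?_
    rw [pow_add]
    ring
  rw [Finset.sum_congr rfl fun m₂ _ => step m₂, Finset.sum_comm]
  refine Finset.sum_congr rfl fun i _ => ?_
  rw [Finset.mul_sum]

/-- **The Vandiver–Hoffman–Zhao congruence (equation (3.1)), prime-by-prime.** For positive
integers `k₁, k₂` with `k = k₁ + k₂` and a prime `p > k + 2`, the truncated double harmonic
sum `Σ_{0<m₁<m₂<p} 1/(m₁^{k₁} m₂^{k₂})` equals `(-1)^{k₂}·C(k₁+k₂,k₁)·B_{p-k}/k` in
`ZMod p`. -/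
theorem vandiver_hoffman_zhao (k₁ k₂ p : ℕ) (h₁ : 0 < k₁) (h₂ : 0 < k₂)
    (hp : p.Prime) (hkp : k₁ + k₂ + 2 < p) :
    (∑ x ∈ ((Finset.Ioo 0 p) ×ˢ (Finset.Ioo 0 p)).filter (fun x : ℕ × ℕ => x.1 < x.2),
      ((x.1 : ZMod p) ^ k₁)⁻¹ * ((x.2 : ZMod p) ^ k₂)⁻¹)
    = (-1) ^ k₂ * ((k₁ + k₂).choose k₁ : ZMod p) *
        (ratImage p (bernoulli (p - (k₁ + k₂))) * (((k₁ + k₂ : ℕ) : ZMod p))⁻¹) := by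
  haveI : Fact p.Prime := ⟨hp⟩
  classical
  set k : ℕ := k₁ + k₂ with hk
  set a : ℕ := p - 1 - k₁ with ha
  set b : ℕ := p - 1 - k₂ with hb
  -- Step 1: identify LHS with the cast of a natural-number double sum
  set Snat : ℕ := ∑ m₂ ∈ Finset.range p, ∑ m₁ ∈ Finset.range m₂, m₁ ^ a * m₂ ^ b with hSnat
  have hnz : ∀ m : ℕ, 0 < m → m < p → ((m : ZMod p) ≠ 0) := by
    intro m hm0 hmp h
    rw [ZMod.natCast_eq_zero_iff] at h
    exact absurd (Nat.le_of_dvd hm0 h) (by omega)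
  have step1 : (∑ x ∈ ((Finset.Ioo 0 p) ×ˢ (Finset.Ioo 0 p)).filter
        (fun x : ℕ × ℕ => x.1 < x.2),
        ((x.1 : ZMod p) ^ k₁)⁻¹ * ((x.2 : ZMod p) ^ k₂)⁻¹)
      = ((Snat : ℕ) : ZMod p) := by
    rw [Finset.sum_filter, Finset.sum_product_right]
    have inner : ∀ m₂ ∈ Finset.Ioo 0 p,
        (∑ m₁ ∈ Finset.Ioo 0 p, if (m₁, m₂).1 < (m₁, m₂).2 then
            (((m₁, m₂).1 : ZMod p) ^ k₁)⁻¹ * (((m₁, m₂).2 : ZMod p) ^ k₂)⁻¹ else 0)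
        = ∑ m₁ ∈ Finset.range m₂, (m₁ : ZMod p) ^ a * (m₂ : ZMod p) ^ b := by
      intro m₂ hm₂
      have hm₂' := Finset.mem_Ioo.mp hm₂
      dsimp only
      rw [← Finset.sum_filter]
      have hset : (Finset.Ioo 0 p).filter (fun m₁ => m₁ < m₂) = Finset.Ioo 0 m₂ := by
        ext m₁
        simp only [Finset.mem_filter, Finset.mem_Ioo]
        omega
      rw [hset]
      have t1 : (∑ m₁ ∈ Finset.Ioo 0 m₂, ((m₁ : ZMod p) ^ k₁)⁻¹ * ((m₂ : ZMod p) ^ k₂)⁻¹)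
          = ∑ m₁ ∈ Finset.Ioo 0 m₂, (m₁ : ZMod p) ^ a * (m₂ : ZMod p) ^ b := by
        refine Finset.sum_congr rfl fun m₁ hm₁ => ?_
        have hm₁' := Finset.mem_Ioo.mp hm₁
        have h1 : (m₁ : ZMod p) ≠ 0 := hnz m₁ hm₁'.1 (by omega)
        have h2 : (m₂ : ZMod p) ≠ 0 := hnz m₂ hm₂'.1 hm₂'.2
        have inv1 : ((m₁ : ZMod p) ^ k₁)⁻¹ = (m₁ : ZMod p) ^ a := by
          apply inv_eq_of_mul_eq_one_right
          rw [← pow_add]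
          have e : k₁ + a = p - 1 := by omega
          rw [e, ZMod.pow_card_sub_one_eq_one h1]
        have inv2 : ((m₂ : ZMod p) ^ k₂)⁻¹ = (m₂ : ZMod p) ^ b := by
          apply inv_eq_of_mul_eq_one_right
          rw [← pow_add]
          have e : k₂ + b = p - 1 := by omega
          rw [e, ZMod.pow_card_sub_one_eq_one h2]
        rw [inv1, inv2]
      have hsub : Finset.Ioo 0 m₂ ⊆ Finset.range m₂ := by
        intro x hx
        rw [Finset.mem_Ioo] at hx
        exact Finset.mem_range.mpr hx.2
      have hzero : ∀ x ∈ Finset.range m₂, x ∉ Finset.Ioo 0 m₂ →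
          (x : ZMod p) ^ a * (m₂ : ZMod p) ^ b = 0 := by
        intro x hx hx'
        have hxr := Finset.mem_range.mp hx
        have h0 : x = 0 := by
          by_contra h0
          exact hx' (Finset.mem_Ioo.mpr ⟨Nat.pos_of_ne_zero h0, hxr⟩)
        subst h0
        rw [Nat.cast_zero, zero_pow (by omega : a ≠ 0), zero_mul]
      rw [t1, Finset.sum_subset hsub hzero]
    rw [Finset.sum_congr rfl inner]
    have outer : ∑ m₂ ∈ Finset.Ioo 0 p, ∑ m₁ ∈ Finset.range m₂,
          (m₁ : ZMod p) ^ a * (m₂ : ZMod p) ^ b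
        = ∑ m₂ ∈ Finset.range p, ∑ m₁ ∈ Finset.range m₂,
            (m₁ : ZMod p) ^ a * (m₂ : ZMod p) ^ b := by
      apply Finset.sum_subset
      · intro x hx
        rw [Finset.mem_Ioo] at hx
        exact Finset.mem_range.mpr hx.2
      · intro x hx hx'
        have hxr := Finset.mem_range.mp hx
        have h0 : x = 0 := by
          by_contra h0
          exact hx' (Finset.mem_Ioo.mpr ⟨Nat.pos_of_ne_zero h0, hxr⟩)
        subst h0
        simp
    rw [outer, hSnat]
    push_cast
    rfl
  rw [step1]
  -- Step 2: the rational identity, cast to ZMod p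
  set V : ℕ → ℕ := fun i => ∑ m ∈ Finset.range p, m ^ (b + (a + 1 - i)) with hV
  have keyq := key_q p a b
  have hSq : (∑ m₂ ∈ Finset.range p, ∑ m₁ ∈ Finset.range m₂, (m₁ : ℚ) ^ a * (m₂ : ℚ) ^ b)
      = ((Snat : ℕ) : ℚ) := by rw [hSnat]; push_cast; rfl
  have hVq : ∀ i, (∑ m ∈ Finset.range p, (m : ℚ) ^ (b + (a + 1 - i))) = ((V i : ℕ) : ℚ) := by
    intro i; rw [hV]; push_cast; rfl
  rw [hSq] at keyq
  have keyq2 : (((a + 1) * Snat : ℕ) : ℚ)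
      = ∑ i ∈ Finset.range (a + 1),
          bernoulli i * ((a + 1).choose i : ℚ) * ((V i : ℕ) : ℚ) := by
    push_cast
    push_cast at keyq
    rw [keyq]
    exact Finset.sum_congr rfl fun i _ => by rw [hVq i]
  -- niceness of the summands
  have hnice : ∀ i ∈ Finset.range (a + 1),
      ¬ p ∣ (bernoulli i * ((a + 1).choose i : ℚ) * ((V i : ℕ) : ℚ)).den := by
    intro i hi
    have hi' : i < a + 1 := Finset.mem_range.mp hi
    have n1 : ¬ p ∣ (bernoulli i).den := bernoulli_den_nice i (by omega)
    have n2 : ¬ p ∣ ((((a + 1).choose i : ℕ) : ℚ)).den := by simpa using hp.one_lt.ne'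
    have n3 : ¬ p ∣ (((V i : ℕ) : ℚ)).den := by simpa using hp.one_lt.ne'
    exact nice_mul (nice_mul n1 n2) n3
  -- cast keyq2 to ZMod p
  have cast2 : (((a + 1) * Snat : ℕ) : ZMod p)
      = ∑ i ∈ Finset.range (a + 1),
          ((bernoulli i : ℚ) : ZMod p) * (((a + 1).choose i : ℕ) : ZMod p)
            * ((V i : ℕ) : ZMod p) := by
    have := congrArg (fun q : ℚ => (q : ZMod p)) keyq2
    rw [Rat.cast_natCast] at this
    rw [this, cast_sum_zmod hnice]
    refine Finset.sum_congr rfl fun i hi => ?_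
    have hi' : i < a + 1 := Finset.mem_range.mp hi
    have n1 : ¬ p ∣ (bernoulli i).den := bernoulli_den_nice i (by omega)
    have n2 : ¬ p ∣ ((((a + 1).choose i : ℕ) : ℚ)).den := by simpa using hp.one_lt.ne'
    have n3 : ¬ p ∣ (((V i : ℕ) : ℚ)).den := by simpa using hp.one_lt.ne'
    rw [Rat.cast_mul_of_ne_zero ((nice_iff _).mpr (nice_mul n1 n2)) ((nice_iff _).mpr n3),
      Rat.cast_mul_of_ne_zero ((nice_iff _).mpr n1) ((nice_iff _).mpr n2)]
    push_cast
    ring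
  -- Step 3: evaluate the power sums mod p
  have hVcast : ∀ i ∈ Finset.range (a + 1),
      ((V i : ℕ) : ZMod p) = if (p - 1) ∣ (b + (a + 1 - i)) then -1 else 0 := by
    intro i hi
    have : ((V i : ℕ) : ZMod p) = ∑ m ∈ Finset.range p, (m : ZMod p) ^ (b + (a + 1 - i)) := by
      rw [hV]; push_cast; rfl
    rw [this, zmod_sum_range_pow _ (by omega)]
  have hsingle : ∑ i ∈ Finset.range (a + 1),
      ((bernoulli i : ℚ) : ZMod p) * (((a + 1).choose i : ℕ) : ZMod p) * ((V i : ℕ) : ZMod p)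
      = ((bernoulli (p - k) : ℚ) : ZMod p) * (((a + 1).choose (p - k) : ℕ) : ZMod p) * (-1) := by
    rw [Finset.sum_eq_single_of_mem (p - k)]
    · rw [hVcast (p - k) (Finset.mem_range.mpr (by omega)), if_pos (by
        refine ⟨1, ?_⟩
        omega)]
    · exact Finset.mem_range.mpr (by omega)
    · intro i hi hne
      rw [hVcast i hi, if_neg, mul_zero]
      intro hdvd
      obtain ⟨c, hc⟩ := hdvd
      have hi' : i < a + 1 := Finset.mem_range.mp hi
      match c with
      | 0 => omega
      | 1 => omega
      | (n + 2) =>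
        have h2 : (p - 1) * 2 ≤ (p - 1) * (n + 2) := Nat.mul_le_mul_left _ (by omega)
        rw [← hc] at h2
        omega
  rw [hsingle] at cast2
  -- Step 4: final algebra
  have hchoose1 : (a + 1).choose (p - k) = (p - k₁).choose k₂ := by
    have e1 : a + 1 = p - k₁ := by omega
    have e2 : p - k = (p - k₁) - k₂ := by omega
    rw [e1, e2, Nat.choose_symm (by omega)]
  have hcast3 : (((a + 1).choose (p - k) : ℕ) : ZMod p)
      = (-1) ^ k₂ * ((k - 1).choose k₂ : ℕ) := by
    rw [hchoose1, choose_cast_eq h₁ hkp]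
  have hKcast : (((a + 1) : ℕ) : ZMod p) = -(k₁ : ZMod p) := by
    have e1 : a + 1 = p - k₁ := by omega
    rw [e1, Nat.cast_sub (by omega), ZMod.natCast_self, zero_sub]
  -- rewrite the left side of cast2
  rw [Nat.cast_mul, hKcast, hcast3] at cast2
  -- solve for Snat
  have hk₁ : (k₁ : ZMod p) ≠ 0 := by
    rw [Ne, ZMod.natCast_eq_zero_iff]
    exact fun h => absurd (Nat.le_of_dvd h₁ h) (by omega)
  have hkz : (k : ZMod p) ≠ 0 := by
    rw [Ne, ZMod.natCast_eq_zero_iff]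
    exact fun h => absurd (Nat.le_of_dvd (by omega) h) (by omega)
  have natid : k * ((k - 1).choose k₂) = k.choose k₁ * k₁ := by
    have c1 : (k - 1).choose k₂ = (k - 1).choose (k₁ - 1) := by
      rw [← Nat.choose_symm (show k₁ - 1 ≤ k - 1 by omega)]
      congr 1
      omega
    have c2 := Nat.add_one_mul_choose_eq (k - 1) (k₁ - 1)
    have e1 : k - 1 + 1 = k := by omega
    have e2 : k₁ - 1 + 1 = k₁ := by omega
    rw [e1, e2] at c2
    rw [c1, c2]
  have natid' : (k : ZMod p) * ((k - 1).choose k₂ : ℕ) = ((k.choose k₁ : ℕ) : ZMod p) * (k₁ : ZMod p) := by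
    exact_mod_cast congrArg (fun n : ℕ => (n : ZMod p)) natid
  rw [ratImage_eq_cast]
  set β : ZMod p := ((bernoulli (p - k) : ℚ) : ZMod p) with hβ
  -- cast2 : -(k₁) * Snat = β * ((-1)^k₂ * C(k-1,k₂)) * (-1)
  have final : ((Snat : ℕ) : ZMod p)
      = (-1) ^ k₂ * ((k.choose k₁ : ℕ) : ZMod p) * (β * ((k : ℕ) : ZMod p)⁻¹) := by
    have hC1 : (((k - 1).choose k₂ : ℕ) : ZMod p)
        = ((k : ℕ) : ZMod p)⁻¹ * (((k.choose k₁ : ℕ) : ZMod p) * (k₁ : ZMod p)) := by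
      rw [eq_inv_mul_iff_mul_eq₀ hkz]
      exact natid'
    apply mul_left_cancel₀ (neg_ne_zero.mpr hk₁)
    rw [cast2, hC1]
    ring
  rw [final]
end

section
/- Let N be a positive integer and p an odd prime not dividing 2N. Then in ZMod p one has q_p(2) ≡ −(2N/(N+1)) · Σ_{0 ≤ j < N/2} Σ_{0 < m < p, m ≡ −2jp (mod 2N)} 1/m, where q_p(2) = (2^{p−1} − 1)/p ∈ ℤ, the outer sum is over integers j with 0 ≤ j < N/2, the rational number 2N/(N+1) is viewed in ZMod p (its denominator N+1 may be assumed coprime to p by excluding the finitely many primes dividing N+1; equivalently, state the identity multiplied through as (N+1)·q_p(2) ≡ −2N · Σ_{0 ≤ j < N/2} Σ_{0 < m < p, m ≡ −2jp (mod 2N)} 1/m), and the inner sums of reciprocals are rational numbers with denominator coprime to p viewed in ZMod p. -/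
open Finset

open scoped Classical

lemma choose_pred_cast {p : ℕ} (hp : p.Prime) : ∀ k, k ≤ p - 1 →
    ((Nat.choose (p - 1) k : ZMod p) = (-1) ^ k) := by
  intro k
  induction k with
  | zero => simp
  | succ k ih =>
    intro hk
    have hp1 : 1 ≤ p := hp.one_lt.le
    have hkp : k + 1 < p := by omega
    have hdvd : p ∣ Nat.choose p (k + 1) :=
      hp.dvd_choose_self (Nat.succ_ne_zero k) hkp
    have hsplit : Nat.choose p (k + 1) = Nat.choose (p - 1) k + Nat.choose (p - 1) (k + 1) := by
      have : p = (p - 1) + 1 := by omega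
      rw [this, Nat.choose_succ_succ]; simp
    have h0 : ((Nat.choose p (k + 1) : ℕ) : ZMod p) = 0 :=
      (ZMod.natCast_eq_zero_iff _ _).2 hdvd
    rw [hsplit] at h0
    push_cast at h0
    have ihk : ((Nat.choose (p - 1) k : ZMod p)) = (-1) ^ k := ih (by omega)
    rw [ihk] at h0
    have : ((Nat.choose (p - 1) (k + 1) : ℕ) : ZMod p) = -((-1) ^ k) := by linear_combination h0
    rw [this, pow_succ]
    ring

lemma cast_ne_zero_of_Ioo {p k : ℕ} (hp : p.Prime) (hk : k ∈ Ioo 0 p) : (k : ZMod p) ≠ 0 := by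
  simp only [mem_Ioo] at hk
  rw [Ne, ZMod.natCast_eq_zero_iff]
  exact fun h => absurd (Nat.le_of_dvd hk.1 h) (by omega)

lemma two_ne_zero_zmod {p : ℕ} (hp : p.Prime) (hodd : Odd p) : (2 : ZMod p) ≠ 0 := by
  have : ((2 : ℕ) : ZMod p) ≠ 0 := by
    rw [Ne, ZMod.natCast_eq_zero_iff]
    intro h
    have hv : p = 2 := (Nat.prime_dvd_prime_iff_eq hp Nat.prime_two).1 h
    rw [hv] at hodd
    exact (Nat.not_odd_iff_even.2 (by decide)) hodd
  simpa using this

lemma sum_all_inv {p : ℕ} (hp : p.Prime) (hodd : Odd p) :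
    ∑ k ∈ Ioo 0 p, ((k : ZMod p))⁻¹ = 0 := by
  haveI : Fact p.Prime := ⟨hp⟩
  have h2 : (2 : ZMod p) ≠ 0 := two_ne_zero_zmod hp hodd
  have key : ∑ k ∈ Ioo 0 p, ((k : ZMod p))⁻¹ = ∑ k ∈ Ioo 0 p, ((k : ZMod p)) := by
    refine Finset.sum_nbij' (fun k => (((k : ZMod p))⁻¹).val) (fun k => (((k : ZMod p))⁻¹).val)
      ?_ ?_ ?_ ?_ ?_
    · intro a ha
      have hne : ((a : ZMod p))⁻¹ ≠ 0 := inv_ne_zero (cast_ne_zero_of_Ioo hp ha)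
      simp only [mem_Ioo]
      exact ⟨Nat.pos_of_ne_zero (fun h => hne (by rwa [← ZMod.val_eq_zero])), ZMod.val_lt _⟩
    · intro a ha
      have hne : ((a : ZMod p))⁻¹ ≠ 0 := inv_ne_zero (cast_ne_zero_of_Ioo hp ha)
      simp only [mem_Ioo]
      exact ⟨Nat.pos_of_ne_zero (fun h => hne (by rwa [← ZMod.val_eq_zero])), ZMod.val_lt _⟩
    · intro a ha
      simp only [mem_Ioo] at ha
      show ((((((a : ℕ) : ZMod p))⁻¹.val : ℕ) : ZMod p))⁻¹.val = a
      rw [ZMod.natCast_zmod_val, inv_inv, ZMod.val_cast_of_lt ha.2]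
    · intro a ha
      simp only [mem_Ioo] at ha
      show ((((((a : ℕ) : ZMod p))⁻¹.val : ℕ) : ZMod p))⁻¹.val = a
      rw [ZMod.natCast_zmod_val, inv_inv, ZMod.val_cast_of_lt ha.2]
    · intro a ha
      show ((a : ZMod p))⁻¹ = ((((a : ZMod p))⁻¹.val : ℕ) : ZMod p)
      rw [ZMod.natCast_zmod_val]
  rw [key, ← Nat.cast_sum]
  have hp0 := hp.pos
  have hins : range p = insert 0 (Ioo 0 p) := by
    ext x; simp only [mem_range, mem_insert, mem_Ioo]; omega
  have hsum : (∑ k ∈ Ioo 0 p, k) * 2 = p * (p - 1) := by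
    rw [← Finset.sum_range_id_mul_two p, hins, Finset.sum_insert (by simp), zero_add]
  have h0 : ((∑ k ∈ Ioo 0 p, k : ℕ) : ZMod p) * 2 = 0 := by
    have hc : (((∑ k ∈ Ioo 0 p, k) * 2 : ℕ) : ZMod p) = ((p * (p - 1) : ℕ) : ZMod p) := by
      rw [hsum]
    rwa [Nat.cast_mul, Nat.cast_mul, ZMod.natCast_self, zero_mul, Nat.cast_ofNat] at hc
  rcases mul_eq_zero.1 h0 with h | h
  · exact h
  · exact absurd h h2

lemma two_q {p : ℕ} (hp : p.Prime) (hodd : Odd p) :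
    (2 : ZMod p) * (((2 ^ (p - 1) - 1) / p : ℕ) : ZMod p)
      = ∑ k ∈ Ioo 0 p, (-1) ^ (k - 1) * ((k : ZMod p))⁻¹ := by
  haveI : Fact p.Prime := ⟨hp⟩
  have hp1 : 1 ≤ p := hp.one_lt.le
  have h2 : (2 : ZMod p) ≠ 0 := two_ne_zero_zmod hp hodd
  -- Fermat: p ∣ 2^(p-1) - 1
  have hfer : p ∣ 2 ^ (p - 1) - 1 := by
    have hpow : (2 : ZMod p) ^ (p - 1) = 1 := ZMod.pow_card_sub_one_eq_one h2
    have h1le : 1 ≤ 2 ^ (p - 1) := Nat.one_le_two_pow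
    have : ((2 ^ (p - 1) - 1 : ℕ) : ZMod p) = 0 := by
      rw [Nat.cast_sub h1le]
      push_cast
      rw [hpow]; ring
    exact (ZMod.natCast_eq_zero_iff _ _).1 this
  set q := (2 ^ (p - 1) - 1) / p with hqdef
  have hq : p * q = 2 ^ (p - 1) - 1 := Nat.mul_div_cancel' hfer
  -- binomial sum
  have hins : range (p + 1) = insert 0 (insert p (Ioo 0 p)) := by
    ext x; simp only [mem_range, mem_insert, mem_Ioo]; omega
  have hbin : 1 + (1 + ∑ k ∈ Ioo 0 p, Nat.choose p k) = 2 ^ p := by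
    rw [← Nat.sum_range_choose p, hins, Finset.sum_insert (by simp; omega),
      Finset.sum_insert (by simp)]
    simp
  have h2p : 2 ^ p = 2 ^ (p - 1) * 2 := by
    conv_lhs => rw [show p = (p - 1) + 1 by omega]
    rw [pow_succ]
  have hkey : p * (2 * q) = ∑ k ∈ Ioo 0 p, Nat.choose p k := by
    have h1le : 1 ≤ 2 ^ (p - 1) := Nat.one_le_two_pow
    calc p * (2 * q) = 2 * (p * q) := by ring
    _ = 2 * (2 ^ (p - 1) - 1) := by rw [hq]
    _ = ∑ k ∈ Ioo 0 p, Nat.choose p k := by omega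
  have hc : ∀ k ∈ Ioo 0 p, Nat.choose p k = p * (Nat.choose p k / p) := by
    intro k hk
    simp only [mem_Ioo] at hk
    exact (Nat.mul_div_cancel' (hp.dvd_choose_self (by omega) hk.2)).symm
  rw [Finset.sum_congr rfl hc, ← Finset.mul_sum] at hkey
  have hq2 : 2 * q = ∑ k ∈ Ioo 0 p, Nat.choose p k / p :=
    Nat.eq_of_mul_eq_mul_left hp.pos hkey
  have hcast : (2 : ZMod p) * (q : ZMod p) = ∑ k ∈ Ioo 0 p, ((Nat.choose p k / p : ℕ) : ZMod p) := by
    have := congrArg (fun n : ℕ => (n : ZMod p)) hq2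
    push_cast at this
    convert this using 2
  rw [hcast]
  refine Finset.sum_congr rfl ?_
  intro k hk
  have hkIoo := hk
  simp only [mem_Ioo] at hk
  have hkne : (k : ZMod p) ≠ 0 := cast_ne_zero_of_Ioo hp hkIoo
  -- p * choose (p-1) (k-1) = choose p k * k
  have hid : p * Nat.choose (p - 1) (k - 1) = Nat.choose p k * k := by
    have := Nat.add_one_mul_choose_eq (p - 1) (k - 1)
    rwa [show p - 1 + 1 = p by omega, show k - 1 + 1 = k by omega] at this
  have hdvd : Nat.choose p k = p * (Nat.choose p k / p) :=
    (Nat.mul_div_cancel' (hp.dvd_choose_self (by omega) hk.2)).symm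
  rw [hdvd] at hid
  have hid2 : Nat.choose (p - 1) (k - 1) = Nat.choose p k / p * k :=
    Nat.eq_of_mul_eq_mul_left hp.pos (by linarith [hid])
  have hcast2 : ((Nat.choose p k / p : ℕ) : ZMod p) * (k : ZMod p) = (-1) ^ (k - 1) := by
    rw [← choose_pred_cast hp (k - 1) (by omega), ← Nat.cast_mul, ← hid2]
  field_simp at hcast2 ⊢
  linear_combination hcast2

lemma even_half {p : ℕ} (hp : p.Prime) (hodd : Odd p) :
    ∑ k ∈ (Ioo 0 p).filter (fun k => Even k), ((k : ZMod p))⁻¹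
      = 2⁻¹ * ∑ k ∈ (Ioo 0 p).filter (fun k => 2 * k < p), ((k : ZMod p))⁻¹ := by
  haveI : Fact p.Prime := ⟨hp⟩
  rw [Finset.mul_sum]
  refine Finset.sum_nbij' (fun k => k / 2) (fun j => 2 * j) ?_ ?_ ?_ ?_ ?_
  · intro a ha
    simp only [mem_filter, mem_Ioo] at ha ⊢
    obtain ⟨⟨h0, hlt⟩, c, hc⟩ := ha
    omega
  · intro j hj
    simp only [mem_filter, mem_Ioo] at hj ⊢
    exact ⟨⟨by omega, by omega⟩, ⟨j, by ring⟩⟩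
  · intro a ha
    simp only [mem_filter, mem_Ioo] at ha
    obtain ⟨_, c, hc⟩ := ha
    show 2 * (a / 2) = a
    omega
  · intro j _
    show 2 * j / 2 = j
    omega
  · intro a ha
    simp only [mem_filter, mem_Ioo] at ha
    obtain ⟨⟨h0, hlt⟩, c, hc⟩ := ha
    have : (a : ZMod p) = 2 * ((a / 2 : ℕ) : ZMod p) := by
      rw [← Nat.cast_ofNat, ← Nat.cast_mul]
      congr 1
      omega
    rw [this, mul_inv]

lemma half_sum {p : ℕ} (hp : p.Prime) (hodd : Odd p) :
    ∑ k ∈ (Ioo 0 p).filter (fun k => 2 * k < p), ((k : ZMod p))⁻¹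
      = -2 * (((2 ^ (p - 1) - 1) / p : ℕ) : ZMod p) := by
  haveI : Fact p.Prime := ⟨hp⟩
  have h2 : (2 : ZMod p) ≠ 0 := two_ne_zero_zmod hp hodd
  have hq := two_q hp hodd
  have hstep : ∑ k ∈ Ioo 0 p, (-1 : ZMod p) ^ (k - 1) * ((k : ZMod p))⁻¹
      = ∑ k ∈ Ioo 0 p, (if Even k then -((k : ZMod p))⁻¹ else ((k : ZMod p))⁻¹) := by
    refine Finset.sum_congr rfl ?_
    intro k hk
    simp only [mem_Ioo] at hk
    by_cases he : Even k
    · rw [if_pos he, (Nat.Even.sub_odd (by omega) he odd_one).neg_one_pow]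
      ring
    · rw [if_neg he]
      have hev : Even (k - 1) :=
        Nat.Odd.sub_odd (Nat.not_even_iff_odd.1 he) odd_one
      rw [hev.neg_one_pow, one_mul]
  rw [hstep, Finset.sum_ite, Finset.sum_neg_distrib] at hq
  have hsplit := Finset.sum_filter_add_sum_filter_not (Ioo 0 p) (fun k => Even k)
    (fun k => ((k : ZMod p))⁻¹)
  rw [sum_all_inv hp hodd] at hsplit
  have heven := even_half hp hodd
  set H := ∑ k ∈ (Ioo 0 p).filter (fun k => 2 * k < p), ((k : ZMod p))⁻¹ with hH
  set A := ∑ k ∈ (Ioo 0 p).filter (fun k => Even k), ((k : ZMod p))⁻¹ with hA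
  set q : ZMod p := (((2 ^ (p - 1) - 1) / p : ℕ) : ZMod p) with hqd
  -- hq : 2 * q = -A + B, hsplit : A + B = 0, heven : A = 2⁻¹ * H
  have hB : ∑ k ∈ (Ioo 0 p).filter (fun k => ¬ Even k), ((k : ZMod p))⁻¹ = -A := by
    linear_combination hsplit
  rw [hB] at hq
  -- hq : 2 * q = -A + -A
  rw [heven] at hq
  -- hq : 2*q = -(2⁻¹*H) + -(2⁻¹*H)
  have h1 : (2 : ZMod p) * 2⁻¹ = 1 := mul_inv_cancel₀ h2
  have h3 : 2 * q = -((2 * 2⁻¹) * H) := by rw [hq]; ring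
  rw [h1, one_mul] at h3
  linear_combination h3

lemma eq_of_castp {p a b : ℕ} (ha : a < p) (hb : b < p) (h : (a : ZMod p) = (b : ZMod p)) :
    a = b := by
  have hp : 0 < p := by omega
  haveI : NeZero p := ⟨by omega⟩
  calc a = ((a : ZMod p)).val := (ZMod.val_cast_of_lt ha).symm
  _ = ((b : ZMod p)).val := by rw [h]
  _ = b := ZMod.val_cast_of_lt hb

-- parity of ⌊2Nk/p⌋
lemma parity_iff {p N k : ℕ} (hp0 : 0 < p) (hnd : ¬ p ∣ N * k) :
    (2 * N * k / p) % 2 = 0 ↔ 2 * (N * k % p) < p := by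
  set d := N * k / p with hd
  set r := N * k % p with hr
  have hdm : N * k = p * d + r := (Nat.div_add_mod _ _).symm
  have hrp : r < p := Nat.mod_lt _ hp0
  have hr0 : r ≠ 0 := fun h => hnd (Nat.dvd_of_mod_eq_zero h)
  have key : 2 * N * k / p = 2 * d + 2 * r / p := by
    have h1 : 2 * N * k = 2 * r + 2 * d * p := by rw [mul_assoc, hdm]; ring
    rw [h1, Nat.add_mul_div_right _ _ hp0, Nat.add_comm]
  by_cases hc : 2 * r < p
  · rw [key, Nat.div_eq_of_lt hc]
    simp [hc]
  · have h1 : 2 * r / p = 1 := Nat.div_eq_of_lt_le (by omega) (by omega)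
    rw [key, h1]
    omega

-- multiplication by N bijection
lemma mult_N {p N : ℕ} (hp : p.Prime) (hN : ¬ p ∣ N) :
    ∑ m ∈ (Ioo 0 p).filter (fun m => 2 * (N * m % p) < p), ((m : ZMod p))⁻¹
      = (N : ZMod p) * ∑ k ∈ (Ioo 0 p).filter (fun k => 2 * k < p), ((k : ZMod p))⁻¹ := by
  haveI : Fact p.Prime := ⟨hp⟩
  have hp0 := hp.pos
  have hNz : (N : ZMod p) ≠ 0 := by
    rw [Ne, ZMod.natCast_eq_zero_iff]; exact hN
  set N' := (((N : ZMod p))⁻¹).val with hN'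
  have hN'c : ((N' : ℕ) : ZMod p) = ((N : ZMod p))⁻¹ := ZMod.natCast_zmod_val _
  rw [Finset.mul_sum]
  refine Finset.sum_nbij' (fun m => N * m % p) (fun t => N' * t % p) ?_ ?_ ?_ ?_ ?_
  · intro m hm
    simp only [mem_filter, mem_Ioo] at hm ⊢
    obtain ⟨⟨h0, hlt⟩, hcond⟩ := hm
    have hnd : ¬ p ∣ N * m := by
      rw [hp.dvd_mul]
      push_neg
      exact ⟨hN, fun h => absurd (Nat.le_of_dvd h0 h) (by omega)⟩
    refine ⟨⟨Nat.pos_of_ne_zero (fun h => hnd (Nat.dvd_of_mod_eq_zero h)), Nat.mod_lt _ hp0⟩, ?_⟩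
    omega
  · intro t ht
    simp only [mem_filter, mem_Ioo] at ht ⊢
    obtain ⟨⟨h0, hlt⟩, hcond⟩ := ht
    have hN'd : ¬ p ∣ N' := by
      rw [← ZMod.natCast_eq_zero_iff, hN'c]
      exact inv_ne_zero hNz
    have hnd : ¬ p ∣ N' * t := by
      rw [hp.dvd_mul]
      push_neg
      exact ⟨hN'd, fun h => absurd (Nat.le_of_dvd h0 h) (by omega)⟩
    have hmem : N' * t % p ∈ Ioo 0 p :=
      mem_Ioo.2 ⟨Nat.pos_of_ne_zero (fun h => hnd (Nat.dvd_of_mod_eq_zero h)), Nat.mod_lt _ hp0⟩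
    refine ⟨mem_Ioo.1 hmem, ?_⟩
    -- N * (N' * t % p) % p = t
    have hkey : N * (N' * t % p) % p = t := by
      apply eq_of_castp (Nat.mod_lt _ hp0) hlt
      rw [ZMod.natCast_mod]
      push_cast
      rw [ZMod.natCast_mod]
      push_cast [hN'c]
      field_simp
    rw [hkey]
    exact hcond
  · intro m hm
    simp only [mem_filter, mem_Ioo] at hm
    show N' * (N * m % p) % p = m
    apply eq_of_castp (Nat.mod_lt _ hp0) hm.1.2
    rw [ZMod.natCast_mod]
    push_cast [ZMod.natCast_mod, hN'c]
    field_simp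
  · intro t ht
    simp only [mem_filter, mem_Ioo] at ht
    show N * (N' * t % p) % p = t
    apply eq_of_castp (Nat.mod_lt _ hp0) ht.1.2
    rw [ZMod.natCast_mod]
    push_cast [ZMod.natCast_mod, hN'c]
    field_simp
  · intro m hm
    simp only [mem_filter, mem_Ioo] at hm
    have hc : (((N * m % p : ℕ)) : ZMod p) = (N : ZMod p) * (m : ZMod p) := by
      rw [ZMod.natCast_mod]; push_cast; ring
    rw [hc, mul_inv]
    have hmz : (m : ZMod p) ≠ 0 := cast_ne_zero_of_Ioo hp (mem_Ioo.2 hm.1)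
    field_simp

lemma mod_reflect {p N m : ℕ} (hp : p.Prime) (hN : ¬ p ∣ N) (h0 : 0 < m) (hlt : m < p) :
    N * (p - m) % p = p - N * m % p := by
  haveI : Fact p.Prime := ⟨hp⟩
  have hp0 := hp.pos
  have hnd : ¬ p ∣ N * m := by
    rw [hp.dvd_mul]
    push_neg
    exact ⟨hN, fun h => absurd (Nat.le_of_dvd h0 h) (by omega)⟩
  have hr0 : N * m % p ≠ 0 := fun h => hnd (Nat.dvd_of_mod_eq_zero h)
  have hrlt : N * m % p < p := Nat.mod_lt _ hp0
  apply eq_of_castp (Nat.mod_lt _ hp0) (by omega)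
  rw [ZMod.natCast_mod, Nat.cast_mul, Nat.cast_sub hlt.le, Nat.cast_sub hrlt.le,
    ZMod.natCast_self, ZMod.natCast_mod]
  push_cast
  ring

lemma sumE {p N : ℕ} (hp : p.Prime) (hodd : Odd p) (hN : ¬ p ∣ N) :
    2 * ∑ k ∈ (Ioo 0 p).filter (fun k => 2 * k < p ∧ 2 * (N * k % p) < p), ((k : ZMod p))⁻¹
      = ((N : ZMod p) + 1) * ∑ k ∈ (Ioo 0 p).filter (fun k => 2 * k < p), ((k : ZMod p))⁻¹ := by
  haveI : Fact p.Prime := ⟨hp⟩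
  have hp0 := hp.pos
  have hpodd : p % 2 = 1 := Nat.odd_iff.1 hodd
  -- split T by 2m < p
  have hsplitT := Finset.sum_filter_add_sum_filter_not
    ((Ioo 0 p).filter (fun m => 2 * (N * m % p) < p)) (fun m => 2 * m < p)
    (fun m => ((m : ZMod p))⁻¹)
  have hfe : ((Ioo 0 p).filter (fun m => 2 * (N * m % p) < p)).filter (fun m => 2 * m < p)
      = (Ioo 0 p).filter (fun k => 2 * k < p ∧ 2 * (N * k % p) < p) := by
    rw [Finset.filter_filter]
    apply Finset.filter_congr
    intro x _; tauto
  have hfe2 : ((Ioo 0 p).filter (fun k => 2 * k < p)).filter (fun k => ¬ 2 * (N * k % p) < p)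
      = (Ioo 0 p).filter (fun k => 2 * k < p ∧ ¬ 2 * (N * k % p) < p) := by
    rw [Finset.filter_filter]
  -- reflection: second part of T equals minus sum over O
  have hrefl : ∑ m ∈ ((Ioo 0 p).filter (fun m => 2 * (N * m % p) < p)).filter
        (fun m => ¬ 2 * m < p), ((m : ZMod p))⁻¹
      = ∑ k ∈ (Ioo 0 p).filter (fun k => 2 * k < p ∧ ¬ 2 * (N * k % p) < p),
          -(((k : ZMod p))⁻¹) := by
    refine Finset.sum_nbij' (fun m => p - m) (fun k => p - k) ?_ ?_ ?_ ?_ ?_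
    · intro m hm
      simp only [mem_filter, mem_Ioo] at hm ⊢
      obtain ⟨⟨⟨h0, hlt⟩, hcond⟩, hbig⟩ := hm
      have hmod := mod_reflect hp hN h0 hlt
      have hrlt : N * m % p < p := Nat.mod_lt _ hp0
      refine ⟨⟨by omega, by omega⟩, by omega, by omega⟩
    · intro k hk
      simp only [mem_filter, mem_Ioo] at hk ⊢
      obtain ⟨⟨h0, hlt⟩, hsmall, hcond⟩ := hk
      have hmod := mod_reflect hp hN h0 hlt
      have hrlt : N * k % p < p := Nat.mod_lt _ hp0
      have hr0 : N * k % p ≠ 0 := by omega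
      refine ⟨⟨⟨by omega, by omega⟩, by omega⟩, by omega⟩
    · intro m hm
      simp only [mem_filter, mem_Ioo] at hm
      show p - (p - m) = m
      omega
    · intro k hk
      simp only [mem_filter, mem_Ioo] at hk
      show p - (p - k) = k
      omega
    · intro m hm
      simp only [mem_filter, mem_Ioo] at hm
      obtain ⟨⟨⟨h0, hlt⟩, _⟩, _⟩ := hm
      have hc : (((p - m : ℕ)) : ZMod p) = -(m : ZMod p) := by
        rw [Nat.cast_sub hlt.le, ZMod.natCast_self]; ring
      rw [hc, inv_neg, neg_neg]
  rw [hrefl] at hsplitT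
  rw [Finset.sum_neg_distrib] at hsplitT
  rw [hfe] at hsplitT
  -- split H by cond
  have hsplitH := Finset.sum_filter_add_sum_filter_not
    ((Ioo 0 p).filter (fun k => 2 * k < p)) (fun k => 2 * (N * k % p) < p)
    (fun k => ((k : ZMod p))⁻¹)
  have hfe3 : ((Ioo 0 p).filter (fun k => 2 * k < p)).filter (fun k => 2 * (N * k % p) < p)
      = (Ioo 0 p).filter (fun k => 2 * k < p ∧ 2 * (N * k % p) < p) := by
    rw [Finset.filter_filter]
  rw [hfe2, hfe3] at hsplitH
  have hT := mult_N hp hN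
  rw [← hsplitT] at hT
  linear_combination hT + hsplitH

lemma inner_reindex {p N j : ℕ} (hp : p.Prime) (hN : 0 < N) (hpN : ¬ p ∣ 2 * N)
    (hj : 2 * j < N) :
    ∑ m ∈ (Finset.Ioo 0 p).filter
        (fun m : ℕ => ((m : ZMod (2 * N)) =
          -(((2 * j : ℕ) : ZMod (2 * N)) * (p : ZMod (2 * N))))),
      ((m : ZMod p))⁻¹
    = ∑ k ∈ (Ioo 0 p).filter (fun k => 2 * j * p < 2 * N * k ∧ 2 * N * k < 2 * j * p + p),
        (((2 * N : ℕ) : ZMod p))⁻¹ * ((k : ZMod p))⁻¹ := by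
  haveI : Fact p.Prime := ⟨hp⟩
  have hp0 := hp.pos
  have h2N0 : 0 < 2 * N := by omega
  haveI : NeZero (2 * N) := ⟨by omega⟩
  have hcond_dvd : ∀ m : ℕ, ((m : ZMod (2 * N)) =
      -(((2 * j : ℕ) : ZMod (2 * N)) * (p : ZMod (2 * N)))) ↔ 2 * N ∣ m + 2 * j * p := by
    intro m
    rw [← ZMod.natCast_eq_zero_iff]
    push_cast
    constructor
    · intro h; rw [h]; ring
    · intro h; linear_combination h
  refine Finset.sum_nbij' (fun m => (m + 2 * j * p) / (2 * N)) (fun k => 2 * N * k - 2 * j * p)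
    ?_ ?_ ?_ ?_ ?_
  · intro m hm
    simp only [mem_filter, mem_Ioo] at hm ⊢
    obtain ⟨⟨h0, hlt⟩, hcond⟩ := hm
    have hdvd : 2 * N ∣ m + 2 * j * p := (hcond_dvd m).1 hcond
    have hEq : 2 * N * ((m + 2 * j * p) / (2 * N)) = m + 2 * j * p :=
      Nat.mul_div_cancel' hdvd
    set k := (m + 2 * j * p) / (2 * N) with hk
    have hk0 : 0 < k := by
      rcases Nat.eq_zero_or_pos k with h | h
      · rw [h, Nat.mul_zero] at hEq; omega
      · exact h
    have hub : 2 * N * k < N * p := by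
      have h1 : 2 * j * p + p ≤ N * p := by
        calc 2 * j * p + p = (2 * j + 1) * p := by ring
        _ ≤ N * p := Nat.mul_le_mul_right p (by omega)
      omega
    have hkp : k < p := by
      have h2 : 2 * N * k < 2 * N * p := by
        have : N * p ≤ 2 * N * p := Nat.mul_le_mul_right p (by omega)
        omega
      exact Nat.lt_of_mul_lt_mul_left h2
    exact ⟨⟨hk0, hkp⟩, by omega, by omega⟩
  · intro k hk
    simp only [mem_filter, mem_Ioo] at hk ⊢
    obtain ⟨⟨hk0, hkp⟩, hlo, hhi⟩ := hk
    refine ⟨⟨by omega, by omega⟩, ?_⟩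
    rw [hcond_dvd]
    have : 2 * N * k - 2 * j * p + 2 * j * p = 2 * N * k := by omega
    rw [this]
    exact ⟨k, rfl⟩
  · intro m hm
    simp only [mem_filter, mem_Ioo] at hm
    have hdvd : 2 * N ∣ m + 2 * j * p := (hcond_dvd m).1 hm.2
    show 2 * N * ((m + 2 * j * p) / (2 * N)) - 2 * j * p = m
    rw [Nat.mul_div_cancel' hdvd]
    omega
  · intro k hk
    simp only [mem_filter, mem_Ioo] at hk
    show (2 * N * k - 2 * j * p + 2 * j * p) / (2 * N) = k
    have : 2 * N * k - 2 * j * p + 2 * j * p = 2 * N * k := by omega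
    rw [this, Nat.mul_div_cancel_left k h2N0]
  · intro m hm
    simp only [mem_filter, mem_Ioo] at hm
    obtain ⟨⟨h0, hlt⟩, hcond⟩ := hm
    have hdvd : 2 * N ∣ m + 2 * j * p := (hcond_dvd m).1 hcond
    have hEq : 2 * N * ((m + 2 * j * p) / (2 * N)) = m + 2 * j * p :=
      Nat.mul_div_cancel' hdvd
    have hc := congrArg (fun n : ℕ => (n : ZMod p)) hEq
    push_cast at hc
    rw [ZMod.natCast_self] at hc
    -- hc : 2 * N * k-cast = m + 2*j*0
    have hm_eq : (m : ZMod p) =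
        ((2 * N : ℕ) : ZMod p) * (((m + 2 * j * p) / (2 * N) : ℕ) : ZMod p) := by
      push_cast
      linear_combination -hc
    rw [hm_eq, mul_inv]
lemma outer_combine {p N : ℕ} (hp : p.Prime) (hN : 0 < N) (hpN : ¬ p ∣ 2 * N) (f : ℕ → ZMod p) :
    ∑ j ∈ (range N).filter (fun j => 2 * j < N),
      ∑ k ∈ (Ioo 0 p).filter (fun k => 2 * j * p < 2 * N * k ∧ 2 * N * k < 2 * j * p + p), f k
    = ∑ k ∈ (Ioo 0 p).filter (fun k => 2 * k < p ∧ 2 * N * k / p % 2 = 0), f k := by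
  have hp0 := hp.pos
  classical
  rw [← Finset.sum_biUnion]
  · congr 1
    ext k
    simp only [mem_biUnion, mem_filter, mem_range, mem_Ioo]
    constructor
    · rintro ⟨j, ⟨hjN, hj2⟩, ⟨hk0, hkp⟩, hlo, hhi⟩
      refine ⟨⟨hk0, hkp⟩, ?_, ?_⟩
      · have hub : 2 * N * k < N * p := by
          have h1 : 2 * j * p + p ≤ N * p := by
            calc 2 * j * p + p = (2 * j + 1) * p := by ring
            _ ≤ N * p := Nat.mul_le_mul_right p (by omega)
          omega
        have h2 : N * (2 * k) < N * p := by
          have : N * (2 * k) = 2 * N * k := by ring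
          omega
        exact Nat.lt_of_mul_lt_mul_left h2
      · have hdiv : 2 * N * k / p = 2 * j := by
          apply Nat.div_eq_of_lt_le (by omega)
          have : (2 * j + 1) * p = 2 * j * p + p := by ring
          omega
        omega
    · rintro ⟨⟨hk0, hkp⟩, hhalf, hpar⟩
      set d := 2 * N * k / p with hd
      set r := 2 * N * k % p with hr
      have hdm : 2 * N * k = p * d + r := (Nat.div_add_mod _ _).symm
      have hrp : r < p := Nat.mod_lt _ hp0
      have hnd : ¬ p ∣ 2 * N * k := by
        rw [show 2 * N * k = (2 * N) * k from rfl, hp.dvd_mul]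
        push_neg
        exact ⟨hpN, fun h => absurd (Nat.le_of_dvd hk0 h) (by omega)⟩
      have hr0 : r ≠ 0 := fun h => hnd (Nat.dvd_of_mod_eq_zero h)
      refine ⟨d / 2, ⟨?_, ?_⟩, ⟨hk0, hkp⟩, ?_, ?_⟩
      all_goals have hd2 : d = 2 * (d / 2) := by omega
      · -- d/2 < N
        have hNk : 2 * N * k < N * p := by
          have h1 : N * (2 * k) < N * p := by
            exact mul_lt_mul_of_pos_left hhalf hN
          have : N * (2 * k) = 2 * N * k := by ring
          omega
        have hdN : 2 * (d / 2) * p < N * p := by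
          have : 2 * (d / 2) * p = p * d := by rw [← hd2]; ring
          omega
        have := Nat.lt_of_mul_lt_mul_right hdN
        omega
      · -- 2 * (d/2) < N
        have hNk : 2 * N * k < N * p := by
          have h1 : N * (2 * k) < N * p :=
            mul_lt_mul_of_pos_left hhalf hN
          have : N * (2 * k) = 2 * N * k := by ring
          omega
        have hdN : 2 * (d / 2) * p < N * p := by
          have : 2 * (d / 2) * p = p * d := by rw [← hd2]; ring
          omega
        exact Nat.lt_of_mul_lt_mul_right hdN
      · have : 2 * (d / 2) * p = p * d := by rw [← hd2]; ring
        omega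
      · have : 2 * (d / 2) * p = p * d := by rw [← hd2]; ring
        omega
  · -- pairwise disjoint
    intro j1 h1 j2 h2 hne
    simp only [coe_filter, Set.mem_setOf_eq, mem_range] at h1 h2
    have key : ∀ a b : ℕ, a < b →
        Disjoint ((Ioo 0 p).filter (fun k => 2 * a * p < 2 * N * k ∧ 2 * N * k < 2 * a * p + p))
          ((Ioo 0 p).filter (fun k => 2 * b * p < 2 * N * k ∧ 2 * N * k < 2 * b * p + p)) := by
      intro a b hab
      rw [Finset.disjoint_left]
      intro k hka hkb
      simp only [mem_filter, mem_Ioo] at hka hkb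
      have : 2 * a * p + p ≤ 2 * b * p := by
        calc 2 * a * p + p = (2 * a + 1) * p := by ring
        _ ≤ 2 * b * p := Nat.mul_le_mul_right p (by omega)
      omega
    rcases Nat.lt_or_ge j1 j2 with h | h
    · exact key j1 j2 h
    · exact (key j2 j1 (by omega)).symm

/-- **Equation (4.1), prime-by-prime (multiplied through by `N+1`).** For an odd prime `p` not
dividing `2N`, one has
`(N+1)·q_p(2) = -2N · Σ_{0 ≤ j < N/2} ζ^{[2j]}_{p,2N}(1)` in `ZMod p`, where
`q_p(2) = (2^{p-1}-1)/p` and `ζ^{[2j]}_{p,2N}(1) = Σ_{0<m<p, m ≡ -2jp (mod 2N)} 1/m`. -/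
theorem log_two_as_level_2N (N p : ℕ) (hN : 0 < N) (hp : p.Prime) (hodd : Odd p)
    (hpN : ¬ p ∣ 2 * N) :
    ((N : ZMod p) + 1) * (((2 ^ (p - 1) - 1) / p : ℕ) : ZMod p)
    = -(((2 * N : ℕ) : ZMod p)) *
        ∑ j ∈ (Finset.range N).filter (fun j => 2 * j < N),
          ∑ m ∈ (Finset.Ioo 0 p).filter
            (fun m : ℕ => ((m : ZMod (2 * N)) =
              -(((2 * j : ℕ) : ZMod (2 * N)) * (p : ZMod (2 * N))))),
          ((m : ZMod p))⁻¹ := by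
  haveI : Fact p.Prime := ⟨hp⟩
  have hp0 := hp.pos
  have hNd : ¬ p ∣ N := fun h => hpN (h.mul_left 2)
  have h2 : (2 : ZMod p) ≠ 0 := two_ne_zero_zmod hp hodd
  have h2N : ((2 * N : ℕ) : ZMod p) ≠ 0 := by
    rw [Ne, ZMod.natCast_eq_zero_iff]; exact hpN
  have hstep1 : ∑ j ∈ (Finset.range N).filter (fun j => 2 * j < N),
      ∑ m ∈ (Finset.Ioo 0 p).filter
        (fun m : ℕ => ((m : ZMod (2 * N)) =
          -(((2 * j : ℕ) : ZMod (2 * N)) * (p : ZMod (2 * N))))),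
      ((m : ZMod p))⁻¹
      = ∑ j ∈ (range N).filter (fun j => 2 * j < N),
          ∑ k ∈ (Ioo 0 p).filter (fun k => 2 * j * p < 2 * N * k ∧ 2 * N * k < 2 * j * p + p),
            (((2 * N : ℕ) : ZMod p))⁻¹ * ((k : ZMod p))⁻¹ := by
    refine Finset.sum_congr rfl ?_
    intro j hj
    simp only [mem_filter, mem_range] at hj
    exact inner_reindex hp hN hpN hj.2
  rw [hstep1, outer_combine hp hN hpN (fun k => (((2 * N : ℕ) : ZMod p))⁻¹ * ((k : ZMod p))⁻¹)]
  have hsets : (Ioo 0 p).filter (fun k => 2 * k < p ∧ 2 * N * k / p % 2 = 0)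
      = (Ioo 0 p).filter (fun k => 2 * k < p ∧ 2 * (N * k % p) < p) := by
    ext x
    simp only [mem_filter, mem_Ioo]
    have hiff : (0 < x ∧ x < p) → (2 * N * x / p % 2 = 0 ↔ 2 * (N * x % p) < p) := by
      intro hx
      apply parity_iff hp0
      rw [hp.dvd_mul]
      push_neg
      exact ⟨hNd, fun h => absurd (Nat.le_of_dvd hx.1 h) (by omega)⟩
    constructor
    · rintro ⟨hx, hh, hpar⟩; exact ⟨hx, hh, (hiff hx).1 hpar⟩
    · rintro ⟨hx, hh, hpar⟩; exact ⟨hx, hh, (hiff hx).2 hpar⟩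
  rw [hsets, ← Finset.mul_sum]
  set S := ∑ k ∈ (Ioo 0 p).filter (fun k => 2 * k < p ∧ 2 * (N * k % p) < p),
    ((k : ZMod p))⁻¹ with hS
  have hE := sumE hp hodd hNd
  have hH := half_sum hp hodd
  rw [← hS] at hE
  apply mul_left_cancel₀ h2
  have hc : ((2 * N : ℕ) : ZMod p) * (((2 * N : ℕ) : ZMod p))⁻¹ = 1 := mul_inv_cancel₀ h2N
  linear_combination hE + ((N : ZMod p) + 1) * hH + 2 * S * hc
end
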